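/- Let $1 < p, q < \infty$ with $1/p + 1/q = 1$. If $u \in U^p$ and $\phi : \mathbb{R} \to L^2(\mathbb{R}^n)$ with $\partial_t \phi \in L^1_t L^2_x$, then $|\int_{\mathbb{R}} \langle \partial_t \phi(t), u(t) \rangle_{L^2} \, dt| \leq |\phi|_{V^q} \|u\|_{U^p}$. -/

import Mathlib

open MeasureTheory ENNReal Filter

noncomputable section

/-- The space `L²(ℝⁿ; ℂ)`. -/
abbrev Hsp (n : ℕ) : Type :=
  MeasureTheory.Lp ℂ 2 (volume : Measure (EuclideanSpace ℝ (Fin n)))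

namespace DP

variable {n : ℕ}

/-- The homogeneous `p`-variation seminorm of `v : ℝ → L²(ℝⁿ)`, as a supremum over all
finite increasing sequences (partitions). -/
def pVar (p : ℝ) (v : ℝ → Hsp n) : ℝ≥0∞ :=
  ⨆ (N : ℕ) (t : Fin (N + 1) → ℝ) (_ : StrictMono t),
    (∑ j : Fin N, (‖v (t j.succ) - v (t j.castSucc)‖₊ : ℝ≥0∞) ^ p) ^ (1 / p)

/-- The `L^∞_t L^2_x` norm of `v : ℝ → L²(ℝⁿ)`. -/
def supNorm (v : ℝ → Hsp n) : ℝ≥0∞ := ⨆ t : ℝ, (‖v t‖₊ : ℝ≥0∞)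

/-- The `V^p` norm `‖v‖_{V^p} = ‖v‖_{L^∞_t L^2_x} + |v|_{V^p}`. -/
def VpNorm (p : ℝ) (v : ℝ → Hsp n) : ℝ≥0∞ := supNorm v + pVar p v

/-- The step function with partition points `t 0 < t 1 < ... < t N`, taking the value
`f j` on `[t j, t (j+1))` and `f N` on `[t N, ∞)` (and `0` on `(-∞, t 0)`). -/
def stepFun (N : ℕ) (t : Fin (N + 1) → ℝ) (f : Fin (N + 1) → Hsp n) : ℝ → Hsp n := fun s =>
  (∑ j : Fin N,
      Set.indicator (Set.Ico (t j.castSucc) (t j.succ)) (fun _ => f j.castSucc) s)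
    + Set.indicator (Set.Ici (t (Fin.last N))) (fun _ => f (Fin.last N)) s

/-- A `U^p` atom: a step function whose values are `ℓ^p`-normalised in `L²`. -/
def IsUpAtom (p : ℝ) (u : ℝ → Hsp n) : Prop :=
  ∃ (N : ℕ) (t : Fin (N + 1) → ℝ) (f : Fin (N + 1) → Hsp n),
    StrictMono t ∧ u = stepFun N t f ∧ (∑ j, ‖f j‖ ^ p) ^ (1 / p) = 1

/-- The atomic `U^p` norm: the infimum of `∑ |c j|` over all representations
`u = ∑ c j • (a j)` as an absolutely convergent sum of `U^p` atoms. -/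
def UpNorm (p : ℝ) (u : ℝ → Hsp n) : ℝ≥0∞ :=
  ⨅ (c : ℕ → ℝ) (a : ℕ → ℝ → Hsp n) (_ : ∀ j, IsUpAtom p (a j))
    (_ : Summable fun j => |c j|)
    (_ : ∀ s : ℝ, HasSum (fun j => c j • a j s) (u s)),
    ENNReal.ofReal (∑' j, |c j|)

end DP


section Aux

open DP Set
open scoped NNReal

variable {n : ℕ}



lemma stepFun_sm (N : ℕ) (t : Fin (N+1) → ℝ) (f : Fin (N+1) → Hsp n) :
    StronglyMeasurable (stepFun N t f) := by
  unfold stepFun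
  exact (Finset.stronglyMeasurable_fun_sum (Finset.univ : Finset (Fin N)) fun j _ =>
      (stronglyMeasurable_const : StronglyMeasurable (fun _ : ℝ => f j.castSucc)).indicator (measurableSet_Ico : MeasurableSet (Set.Ico (t j.castSucc) (t j.succ)))).add
    ((stronglyMeasurable_const : StronglyMeasurable (fun _ : ℝ => f (Fin.last N))).indicator (measurableSet_Ici : MeasurableSet (Set.Ici (t (Fin.last N)))))

lemma stepFun_eq_cases (N : ℕ) {t : Fin (N+1) → ℝ} (ht : StrictMono t)
    (f : Fin (N+1) → Hsp n) (s : ℝ) :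
    stepFun N t f s = 0 ∨ ∃ j, stepFun N t f s = f j := by
  unfold stepFun
  by_cases hlast : t (Fin.last N) ≤ s
  · right
    refine ⟨Fin.last N, ?_⟩
    rw [Finset.sum_eq_zero, Set.indicator_of_mem (Set.mem_Ici.2 hlast), zero_add]
    intro j _
    apply Set.indicator_of_notMem
    intro hj
    have h1 : t j.succ ≤ t (Fin.last N) := ht.monotone (Fin.le_last _)
    exact absurd (hj.2.trans_le (h1.trans hlast)) (lt_irrefl s)
  · rw [Set.indicator_of_notMem (by simpa using hlast), add_zero]
    by_cases h0 : s < t 0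
    · left
      apply Finset.sum_eq_zero
      intro j _
      apply Set.indicator_of_notMem
      intro hj
      have : t 0 ≤ t j.castSucc := ht.monotone (Fin.zero_le _)
      exact absurd (h0.trans_le (this.trans hj.1)) (lt_irrefl s)
    · right
      push_neg at h0
      -- find the largest index i with t i ≤ s
      set S : Finset (Fin (N+1)) := Finset.univ.filter (fun i => t i ≤ s) with hS
      have hSne : S.Nonempty := ⟨0, by simp [hS, h0]⟩
      set i₀ := S.max' hSne with hi₀
      have hi₀mem : i₀ ∈ S := S.max'_mem hSne
      have hi₀le : t i₀ ≤ s := by simpa [hS] using hi₀mem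
      have hi₀ne : i₀ ≠ Fin.last N := by
        intro h
        exact hlast (h ▸ hi₀le)
      obtain ⟨j, hj⟩ : ∃ j : Fin N, j.castSucc = i₀ := Fin.exists_castSucc_eq.2 hi₀ne
      have hjs : s < t j.succ := by
        by_contra hcon
        push_neg at hcon
        have hmem : j.succ ∈ S := by simp [hS, hcon]
        have := S.le_max' _ hmem
        rw [← hi₀, ← hj] at this
        exact absurd (lt_of_lt_of_le (Fin.castSucc_lt_succ (i := j)) this) (lt_irrefl _)
      refine ⟨j.castSucc, ?_⟩
      rw [Finset.sum_eq_single j]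
      · rw [Set.indicator_of_mem (Set.mem_Ico.2 ⟨hj ▸ hi₀le, hjs⟩)]
      · intro k _ hk
        apply Set.indicator_of_notMem
        intro hks
        rcases lt_or_gt_of_ne hk with h | h
        · have : t k.succ ≤ t j.castSucc := ht.monotone (Fin.succ_le_castSucc_iff.2 h)
          exact absurd (hks.2.trans_le (this.trans (hj ▸ hi₀le))) (lt_irrefl s)
        · have : t j.succ ≤ t k.castSucc := ht.monotone (Fin.succ_le_castSucc_iff.2 h)
          exact absurd ((hjs.trans_le this).trans_le hks.1) (lt_irrefl s)
      · intro h
        exact absurd (Finset.mem_univ j) h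

lemma norm_f_le {p : ℝ} (hp : 1 < p) {N : ℕ} (f : Fin (N+1) → Hsp n)
    (hf : (∑ j, ‖f j‖ ^ p) ^ (1/p) = 1) (j : Fin (N+1)) : ‖f j‖ ≤ 1 := by
  have hp0 : (0:ℝ) < p := by linarith
  have hsum : ∀ k : Fin (N+1), (0:ℝ) ≤ ‖f k‖ ^ p := fun k => Real.rpow_nonneg (norm_nonneg _) _
  have hS0 : (0:ℝ) ≤ ∑ k, ‖f k‖ ^ p := Finset.sum_nonneg fun k _ => hsum k
  have hS1 : (∑ k, ‖f k‖ ^ p) = 1 := by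
    have := congrArg (fun x : ℝ => x ^ p) hf
    simpa [← Real.rpow_natCast, ← Real.rpow_mul hS0, one_div, inv_mul_cancel₀ hp0.ne'] using this
  have hle : ‖f j‖ ^ p ≤ 1 := hS1 ▸ Finset.single_le_sum (fun k _ => hsum k) (Finset.mem_univ j)
  by_contra hcon
  push_neg at hcon
  have : (1:ℝ) < ‖f j‖ ^ p :=
    (Real.one_lt_rpow_iff_of_pos (lt_trans zero_lt_one hcon)).2 (Or.inl ⟨hcon, hp0⟩)
  linarith

lemma stepFun_norm_le {p : ℝ} (hp : 1 < p) {N : ℕ} {t : Fin (N+1) → ℝ} (ht : StrictMono t)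
    (f : Fin (N+1) → Hsp n) (hf : (∑ j, ‖f j‖ ^ p) ^ (1/p) = 1) (s : ℝ) :
    ‖stepFun N t f s‖ ≤ 1 := by
  rcases stepFun_eq_cases N ht f s with h | ⟨j, h⟩
  · simp [h]
  · rw [h]; exact norm_f_le hp f hf j


lemma atom_bound {p q : ℝ} (hp : 1 < p) (hq : 1 < q) (hpq : 1/p + 1/q = 1)
    (φ φ' : ℝ → Hsp n) (hderiv : ∀ s : ℝ, HasDerivAt φ (φ' s) s)
    (hint : Integrable φ' (volume : Measure ℝ))
    (N : ℕ) (t : Fin (N+1) → ℝ) (f : Fin (N+1) → Hsp n)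
    (ht : StrictMono t) (hf : (∑ j, ‖f j‖ ^ p) ^ (1/p) = 1) :
    (‖∫ s : ℝ, (inner ℂ (φ' s) (stepFun N t f s) : ℂ)‖₊ : ℝ≥0∞) ≤ DP.pVar q φ := by
  classical
  have hp0 : (0:ℝ) < p := by linarith
  have hq0 : (0:ℝ) < q := by linarith
  set L : Hsp n → (Hsp n →L[ℝ] ℂ) := fun x =>
    (Complex.conjCLE.toContinuousLinearMap).comp ((innerSL ℂ x).restrictScalars ℝ) with hL
  have hLapp : ∀ (x g : Hsp n), L x g = (inner ℂ g x : ℂ) := by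
    intro x g
    simp [hL, Complex.conjCLE_apply, inner_conj_symm]
  have hIconst : ∀ x : Hsp n, Integrable (fun s => (inner ℂ (φ' s) x : ℂ)) (volume : Measure ℝ) := by
    intro x
    have := (L x).integrable_comp hint
    simpa only [hLapp] using this
  have key : ∀ (x : Hsp n) (a b : ℝ), a ≤ b →
      ∫ s in Set.Ico a b, (inner ℂ (φ' s) x : ℂ) = (inner ℂ (φ b - φ a) x : ℂ) := by
    intro x a b hab
    have hii : IntervalIntegrable φ' volume a b := hint.intervalIntegrable
    have h1 : ∫ s in Set.Ico a b, (inner ℂ (φ' s) x : ℂ)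
        = ∫ s in a..b, (inner ℂ (φ' s) x : ℂ) := by
      rw [integral_Ico_eq_integral_Ioo, intervalIntegral.integral_of_le hab,
        integral_Ioc_eq_integral_Ioo]
    have h2 : ∫ s in a..b, (inner ℂ (φ' s) x : ℂ) = L x (∫ s in a..b, φ' s) := by
      rw [← (L x).intervalIntegral_comp_comm hii]
      simp only [hLapp]
    have h3 : ∫ s in a..b, φ' s = φ b - φ a :=
      intervalIntegral.integral_eq_sub_of_hasDerivAt (fun s _ => hderiv s) hii
    rw [h1, h2, h3, hLapp]
  set g : Hsp n := ∫ s in Set.Ici (t (Fin.last N)), φ' s with hg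
  have tail : ∫ s in Set.Ici (t (Fin.last N)), (inner ℂ (φ' s) (f (Fin.last N)) : ℂ)
      = (inner ℂ g (f (Fin.last N)) : ℂ) := by
    have := (L (f (Fin.last N))).integral_comp_comm
      (μ := volume.restrict (Set.Ici (t (Fin.last N)))) hint.restrict
    simpa only [hLapp, ← hg] using this
  have hdecomp : ∀ s : ℝ, (inner ℂ (φ' s) (stepFun N t f s) : ℂ)
      = (∑ j : Fin N, (Set.Ico (t j.castSucc) (t j.succ)).indicator
            (fun z => (inner ℂ (φ' z) (f j.castSucc) : ℂ)) s)
        + (Set.Ici (t (Fin.last N))).indicator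
            (fun z => (inner ℂ (φ' z) (f (Fin.last N)) : ℂ)) s := by
    intro s
    rw [stepFun, inner_add_right, inner_sum]
    congr 1
    · refine Finset.sum_congr rfl fun j _ => ?_
      by_cases hs : s ∈ Set.Ico (t j.castSucc) (t j.succ) <;>
        simp [hs, Set.indicator_of_mem, Set.indicator_of_notMem]
    · by_cases hs : s ∈ Set.Ici (t (Fin.last N)) <;> simp [hs]
  set S0 : ℂ := ∑ j : Fin N, (inner ℂ (φ (t j.succ) - φ (t j.castSucc)) (f j.castSucc) : ℂ)
    with hS0
  have hint1 : ∀ j : Fin N, Integrable ((Set.Ico (t j.castSucc) (t j.succ)).indicator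
      (fun z => (inner ℂ (φ' z) (f j.castSucc) : ℂ))) volume :=
    fun j => (hIconst _).indicator measurableSet_Ico
  have hint2 : Integrable ((Set.Ici (t (Fin.last N))).indicator
      (fun z => (inner ℂ (φ' z) (f (Fin.last N)) : ℂ))) volume :=
    (hIconst _).indicator measurableSet_Ici
  have hIeq : ∫ s : ℝ, (inner ℂ (φ' s) (stepFun N t f s) : ℂ)
      = S0 + (inner ℂ g (f (Fin.last N)) : ℂ) := by
    rw [hS0]
    calc ∫ s : ℝ, (inner ℂ (φ' s) (stepFun N t f s) : ℂ)
        = ∫ s : ℝ, ((∑ j : Fin N, (Set.Ico (t j.castSucc) (t j.succ)).indicator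
              (fun z => (inner ℂ (φ' z) (f j.castSucc) : ℂ)) s)
            + (Set.Ici (t (Fin.last N))).indicator
              (fun z => (inner ℂ (φ' z) (f (Fin.last N)) : ℂ)) s) := by
          exact integral_congr_ae (Filter.Eventually.of_forall hdecomp)
      _ = (∑ j : Fin N, (inner ℂ (φ (t j.succ) - φ (t j.castSucc)) (f j.castSucc) : ℂ))
            + (inner ℂ g (f (Fin.last N)) : ℂ) := by
          rw [integral_add (integrable_finset_sum _ fun j _ => hint1 j) hint2,
            integral_finset_sum _ fun j _ => hint1 j]
          congr 1
          · refine Finset.sum_congr rfl fun j _ => ?_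
            rw [integral_indicator measurableSet_Ico]
            exact key _ _ _ (ht (Fin.castSucc_lt_succ (i := j))).le
          · rw [integral_indicator measurableSet_Ici]
            exact tail
  have hFTC : ∀ T : ℝ, ∫ s in (t (Fin.last N))..T, φ' s = φ T - φ (t (Fin.last N)) :=
    fun T => intervalIntegral.integral_eq_sub_of_hasDerivAt (fun s _ => hderiv s)
      hint.intervalIntegrable
  have htend : Tendsto (fun T => φ T - φ (t (Fin.last N))) atTop (nhds g) := by
    have h2 := MeasureTheory.intervalIntegral_tendsto_integral_Ioi (t (Fin.last N))
      hint.integrableOn (tendsto_id (α := ℝ))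
    simp only [id_eq, hFTC] at h2
    rwa [← integral_Ici_eq_integral_Ioi, ← hg] at h2
  have hVt : Tendsto (fun T => (‖S0 + (inner ℂ (φ T - φ (t (Fin.last N)))
        (f (Fin.last N)) : ℂ)‖₊ : ℝ≥0∞)) atTop
      (nhds (‖S0 + (inner ℂ g (f (Fin.last N)) : ℂ)‖₊ : ℝ≥0∞)) := by
    apply ENNReal.tendsto_coe.2
    apply Filter.Tendsto.nnnorm
    exact tendsto_const_nhds.add
      (((continuous_id.inner continuous_const).tendsto g).comp htend)
  have hVb : ∀ᶠ T in atTop, (‖S0 + (inner ℂ (φ T - φ (t (Fin.last N)))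
      (f (Fin.last N)) : ℂ)‖₊ : ℝ≥0∞) ≤ DP.pVar q φ := by
    filter_upwards [eventually_gt_atTop (t (Fin.last N))] with T hT
    set t' : Fin (N+2) → ℝ := fun j => if h : (j:ℕ) < N+1 then t ⟨(j:ℕ), h⟩ else T with ht'
    have ht'c : ∀ k : Fin (N+1), t' k.castSucc = t k := by
      intro k
      have hk : ((k.castSucc : Fin (N+2)) : ℕ) < N + 1 := by simp; omega
      simp only [ht', dif_pos hk]
      first
      | rfl
      | (congr 1; exact Fin.ext (by simp))
    have hsucc1 : ∀ j : Fin N, t' (j.castSucc.succ) = t j.succ := by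
      intro j
      have hj : ((j.castSucc.succ : Fin (N+2)) : ℕ) < N + 1 := by
        simp only [Fin.val_succ, Fin.coe_castSucc]
        omega
      simp only [ht', dif_pos hj]
      first
      | rfl
      | (congr 1; exact Fin.ext (by simp))
    have hsucc2 : t' ((Fin.last N).succ) = T := by
      have h : ¬ (((Fin.last N).succ : Fin (N+2)) : ℕ) < N + 1 := by simp
      simp only [ht', dif_neg h]
    have hmono' : StrictMono t' := by
      intro i k hik
      have hik' : (i:ℕ) < (k:ℕ) := hik
      by_cases hk : (k:ℕ) < N+1
      · have hi : (i:ℕ) < N+1 := lt_trans hik' hk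
        simp only [ht', dif_pos hi, dif_pos hk]
        exact ht (Fin.mk_lt_mk.2 hik')
      · have hi : (i:ℕ) < N+1 := by omega
        simp only [ht', dif_pos hi, dif_neg hk]
        exact lt_of_le_of_lt (ht.monotone (Fin.le_last _)) hT
    have hVeq : S0 + (inner ℂ (φ T - φ (t (Fin.last N))) (f (Fin.last N)) : ℂ)
        = ∑ k : Fin (N+1), (inner ℂ (φ (t' k.succ) - φ (t' k.castSucc)) (f k) : ℂ) := by
      rw [Fin.sum_univ_castSucc, hS0]
      congr 1
      · refine Finset.sum_congr rfl fun j _ => ?_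
        rw [hsucc1 j, ht'c j.castSucc]
      · rw [hsucc2, ht'c (Fin.last N)]
    have hfp : (∑ k : Fin (N+1), (‖f k‖₊ : ℝ≥0∞) ^ p) ^ (1/p) = 1 := by
      have h1 : ∀ k : Fin (N+1), (‖f k‖₊ : ℝ≥0∞) ^ p = ENNReal.ofReal (‖f k‖ ^ p) := by
        intro k
        rw [← ENNReal.ofReal_rpow_of_nonneg (norm_nonneg _) (by linarith), ofReal_norm_eq_enorm]
        rfl
      rw [Finset.sum_congr rfl fun k _ => h1 k,
        ← ENNReal.ofReal_sum_of_nonneg (fun k _ => Real.rpow_nonneg (norm_nonneg _) _),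
        ENNReal.ofReal_rpow_of_nonneg
          (Finset.sum_nonneg fun k _ => Real.rpow_nonneg (norm_nonneg _) _)
          (le_of_lt (by positivity)), hf, ENNReal.ofReal_one]
    rw [hVeq]
    calc (‖∑ k : Fin (N+1), (inner ℂ (φ (t' k.succ) - φ (t' k.castSucc)) (f k) : ℂ)‖₊ : ℝ≥0∞)
        ≤ ∑ k : Fin (N+1),
            (‖(inner ℂ (φ (t' k.succ) - φ (t' k.castSucc)) (f k) : ℂ)‖₊ : ℝ≥0∞) := by
          rw [← ENNReal.coe_finset_sum]
          exact ENNReal.coe_le_coe.2 (nnnorm_sum_le _ _)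
      _ ≤ ∑ k : Fin (N+1), (‖φ (t' k.succ) - φ (t' k.castSucc)‖₊ : ℝ≥0∞)
            * ((‖f k‖₊ : ℝ≥0∞)) := by
          refine Finset.sum_le_sum fun k _ => ?_
          rw [← ENNReal.coe_mul]
          exact ENNReal.coe_le_coe.2 (nnnorm_inner_le_nnnorm (𝕜 := ℂ) _ _)
      _ ≤ (∑ k : Fin (N+1), (‖φ (t' k.succ) - φ (t' k.castSucc)‖₊ : ℝ≥0∞) ^ q) ^ (1/q)
            * (∑ k : Fin (N+1), (‖f k‖₊ : ℝ≥0∞) ^ p) ^ (1/p) :=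
          ENNReal.inner_le_Lp_mul_Lq _ _ _
            ⟨by rw [inv_one, inv_eq_one_div, inv_eq_one_div]; linarith, hq0, hp0⟩
      _ = (∑ k : Fin (N+1), (‖φ (t' k.succ) - φ (t' k.castSucc)‖₊ : ℝ≥0∞) ^ q) ^ (1/q) := by
          rw [hfp, mul_one]
      _ ≤ DP.pVar q φ :=
          le_iSup_of_le (N+1) (le_iSup_of_le t' (le_iSup_of_le hmono' le_rfl))
  rw [hIeq]
  exact le_of_tendsto hVt hVb

lemma rep_bound {p : ℝ} (hp : 1 < p)
    (φ' : ℝ → Hsp n) (hint : Integrable φ' (volume : Measure ℝ))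
    (u : ℝ → Hsp n) (c : ℕ → ℝ) (a : ℕ → ℝ → Hsp n)
    (hatom : ∀ j, DP.IsUpAtom p (a j)) (hc : Summable fun j => |c j|)
    (hrep : ∀ s : ℝ, HasSum (fun j => c j • a j s) (u s))
    (M : ℝ≥0∞) (hM : M ≠ ⊤)
    (hMa : ∀ j, (‖∫ s : ℝ, (inner ℂ (φ' s) (a j s) : ℂ)‖₊ : ℝ≥0∞) ≤ M) :
    (‖∫ s : ℝ, (inner ℂ (φ' s) (u s) : ℂ)‖₊ : ℝ≥0∞)
      ≤ M * ENNReal.ofReal (∑' j, |c j|) := by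
  classical
  have hasm : ∀ j, AEStronglyMeasurable (a j) (volume : Measure ℝ) := by
    intro j; obtain ⟨N, t, f, hm, he, hn⟩ := hatom j
    rw [he]; exact (stepFun_sm N t f).aestronglyMeasurable
  have hbd : ∀ j s, ‖a j s‖ ≤ 1 := by
    intro j; obtain ⟨N, t, f, hm, he, hn⟩ := hatom j
    intro s; rw [he]; exact stepFun_norm_le hp hm f hn s
  have hbd' : ∀ j s, (‖a j s‖₊ : ℝ≥0) ≤ 1 := by
    intro j s
    exact NNReal.coe_le_coe.1 (by simpa using hbd j s)
  set F : ℕ → ℝ → ℂ := fun j s => c j • (inner ℂ (φ' s) (a j s) : ℂ) with hF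
  have hFm : ∀ j, AEStronglyMeasurable (F j) (volume : Measure ℝ) := fun j =>
    (hint.aestronglyMeasurable.inner (hasm j)).const_smul (c j)
  have hsum : ∀ s, HasSum (fun j => F j s) ((inner ℂ (φ' s) (u s) : ℂ)) := by
    intro s
    have h2 := (hrep s).mapL (innerSL ℂ (φ' s))
    simpa only [hF, innerSL_apply_apply, ContinuousLinearMap.map_smul_of_tower] using h2
  have hKne : (∫⁻ s : ℝ, (‖φ' s‖₊ : ℝ≥0∞)) ≠ ⊤ := hint.2.ne
  have hptbd : ∀ j s, (‖F j s‖₊ : ℝ≥0∞) ≤ ENNReal.ofReal |c j| * (‖φ' s‖₊ : ℝ≥0∞) := by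
    intro j s
    have h2 : ‖F j s‖₊ ≤ ‖c j‖₊ * ‖φ' s‖₊ := by
      calc ‖F j s‖₊ = ‖c j‖₊ * ‖(inner ℂ (φ' s) (a j s) : ℂ)‖₊ := nnnorm_smul _ _
        _ ≤ ‖c j‖₊ * (‖φ' s‖₊ * ‖a j s‖₊) :=
            mul_le_mul_right (nnnorm_inner_le_nnnorm (𝕜 := ℂ) _ _) _
        _ ≤ ‖c j‖₊ * (‖φ' s‖₊ * 1) := by
            refine mul_le_mul_right (mul_le_mul_right (hbd' j s) _) _
        _ = ‖c j‖₊ * ‖φ' s‖₊ := by rw [mul_one]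
    calc (‖F j s‖₊ : ℝ≥0∞) ≤ ((‖c j‖₊ * ‖φ' s‖₊ : ℝ≥0) : ℝ≥0∞) := ENNReal.coe_le_coe.2 h2
      _ = ENNReal.ofReal |c j| * (‖φ' s‖₊ : ℝ≥0∞) := by
          rw [ENNReal.coe_mul, ← Real.enorm_eq_ofReal_abs]; rfl
  have hlin : ∀ j, ∫⁻ s : ℝ, (‖F j s‖₊ : ℝ≥0∞)
      ≤ ENNReal.ofReal |c j| * ∫⁻ s : ℝ, (‖φ' s‖₊ : ℝ≥0∞) := by
    intro j
    rw [← lintegral_const_mul' _ _ ENNReal.ofReal_ne_top]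
    exact lintegral_mono fun s => hptbd j s
  have htsum_ne : ∑' j, ∫⁻ s : ℝ, (‖F j s‖₊ : ℝ≥0∞) ≠ ⊤ := by
    have hcalc : ∑' j, ∫⁻ s : ℝ, (‖F j s‖₊ : ℝ≥0∞)
        ≤ ENNReal.ofReal (∑' j, |c j|) * ∫⁻ s : ℝ, (‖φ' s‖₊ : ℝ≥0∞) :=
      calc ∑' j, ∫⁻ s : ℝ, (‖F j s‖₊ : ℝ≥0∞)
        ≤ ∑' j, ENNReal.ofReal |c j| * ∫⁻ s : ℝ, (‖φ' s‖₊ : ℝ≥0∞) :=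
          ENNReal.tsum_le_tsum hlin
      _ = (∑' j, ENNReal.ofReal |c j|) * ∫⁻ s : ℝ, (‖φ' s‖₊ : ℝ≥0∞) :=
          ENNReal.tsum_mul_right
      _ = ENNReal.ofReal (∑' j, |c j|) * ∫⁻ s : ℝ, (‖φ' s‖₊ : ℝ≥0∞) := by
          rw [ENNReal.ofReal_tsum_of_nonneg (fun j => abs_nonneg _) hc]
    exact ne_top_of_le_ne_top (ENNReal.mul_ne_top ENNReal.ofReal_ne_top hKne) hcalc
  set I : ℕ → ℂ := fun j => ∫ s : ℝ, (inner ℂ (φ' s) (a j s) : ℂ) with hI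
  have hinteq : ∫ s : ℝ, (inner ℂ (φ' s) (u s) : ℂ) = ∑' j, c j • I j := by
    have h0 : ∫ s : ℝ, (inner ℂ (φ' s) (u s) : ℂ) = ∫ s : ℝ, ∑' j, F j s :=
      integral_congr_ae (Filter.Eventually.of_forall fun s => ((hsum s).tsum_eq).symm)
    rw [h0, MeasureTheory.integral_tsum hFm htsum_ne]
    exact tsum_congr fun j => integral_smul _ _
  have hIbd : ∀ j, ‖c j • I j‖ ≤ |c j| * M.toReal := by
    intro j
    rw [norm_smul, Real.norm_eq_abs]
    refine mul_le_mul_of_nonneg_left ?_ (abs_nonneg _)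
    have h2 : ‖I j‖₊ ≤ M.toNNReal := by
      rw [← ENNReal.coe_le_coe, ENNReal.coe_toNNReal hM]
      exact hMa j
    calc ‖I j‖ = ((‖I j‖₊ : ℝ≥0) : ℝ) := (coe_nnnorm _).symm
      _ ≤ ((M.toNNReal : ℝ≥0) : ℝ) := NNReal.coe_le_coe.2 h2
      _ = M.toReal := rfl
  have hsum1 : Summable fun j => ‖c j • I j‖ :=
    Summable.of_nonneg_of_le (fun j => norm_nonneg _) hIbd (hc.mul_right M.toReal)
  have hsum2 : Summable fun j => ‖c j • I j‖₊ := by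
    rw [← NNReal.summable_coe]; simpa using hsum1
  calc (‖∫ s : ℝ, (inner ℂ (φ' s) (u s) : ℂ)‖₊ : ℝ≥0∞)
      = (‖∑' j, c j • I j‖₊ : ℝ≥0∞) := by rw [hinteq]
    _ ≤ ((∑' j, ‖c j • I j‖₊ : ℝ≥0) : ℝ≥0∞) := ENNReal.coe_le_coe.2 (nnnorm_tsum_le hsum2)
    _ = ∑' j, (‖c j • I j‖₊ : ℝ≥0∞) := ENNReal.coe_tsum hsum2
    _ ≤ ∑' j, ENNReal.ofReal |c j| * M := by
        refine ENNReal.tsum_le_tsum fun j => ?_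
        calc (‖c j • I j‖₊ : ℝ≥0∞) = (‖c j‖₊ : ℝ≥0∞) * (‖I j‖₊ : ℝ≥0∞) := by
              rw [nnnorm_smul, ENNReal.coe_mul]
          _ = ENNReal.ofReal |c j| * (‖I j‖₊ : ℝ≥0∞) := by rw [← Real.enorm_eq_ofReal_abs]; rfl
          _ ≤ ENNReal.ofReal |c j| * M := mul_le_mul_right (hMa j) _
    _ = ENNReal.ofReal (∑' j, |c j|) * M := by
        rw [ENNReal.tsum_mul_right,
          ENNReal.ofReal_tsum_of_nonneg (fun j => abs_nonneg _) hc]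
    _ = M * ENNReal.ofReal (∑' j, |c j|) := mul_comm _ _

end Aux

/-- (Dual pairing bound.) Let `1 < p, q < ∞` with `1/p + 1/q = 1`. If `u ∈ U^p`
and `φ : ℝ → L²(ℝⁿ)` has derivative `∂ₜφ ∈ L¹ₜL²ₓ`, then
`|∫ ⟨∂ₜφ(t), u(t)⟩ dt| ≤ |φ|_{V^q} ‖u‖_{U^p}`. -/
theorem stmt4 (n : ℕ) (p q : ℝ) (hp : 1 < p) (hq : 1 < q) (hpq : 1 / p + 1 / q = 1)
    (u : ℝ → Hsp n) (hu : DP.UpNorm p u ≠ ⊤)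
    (φ φ' : ℝ → Hsp n) (hderiv : ∀ t : ℝ, HasDerivAt φ (φ' t) t)
    (hint : Integrable φ' (volume : Measure ℝ)) :
    (‖∫ t : ℝ, (inner ℂ (φ' t) (u t) : ℂ)‖₊ : ℝ≥0∞) ≤ DP.pVar q φ * DP.UpNorm p u := by
  classical
  have hKne : (∫⁻ s : ℝ, (‖φ' s‖₊ : ℝ≥0∞)) ≠ ⊤ := hint.2.ne
  have crude : ∀ v : ℝ → Hsp n, DP.IsUpAtom p v →
      (‖∫ s : ℝ, (inner ℂ (φ' s) (v s) : ℂ)‖₊ : ℝ≥0∞) ≤ ∫⁻ s : ℝ, (‖φ' s‖₊ : ℝ≥0∞) := by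
    rintro v ⟨N, t, f, hm, rfl, hn⟩
    refine le_trans (enorm_integral_le_lintegral_enorm _) (lintegral_mono fun s => ?_)
    calc (‖(inner ℂ (φ' s) (DP.stepFun N t f s) : ℂ)‖₊ : ℝ≥0∞)
        ≤ (‖φ' s‖₊ : ℝ≥0∞) * (‖DP.stepFun N t f s‖₊ : ℝ≥0∞) := by
          rw [← ENNReal.coe_mul]
          exact ENNReal.coe_le_coe.2 (nnnorm_inner_le_nnnorm (𝕜 := ℂ) _ _)
      _ ≤ (‖φ' s‖₊ : ℝ≥0∞) * 1 := by
          refine mul_le_mul_right ?_ _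
          exact ENNReal.coe_le_coe.2
            (NNReal.coe_le_coe.1 (by simpa using stepFun_norm_le hp hm f hn s))
      _ = (‖φ' s‖₊ : ℝ≥0∞) := mul_one _
  have hatomP : ∀ v : ℝ → Hsp n, DP.IsUpAtom p v →
      (‖∫ s : ℝ, (inner ℂ (φ' s) (v s) : ℂ)‖₊ : ℝ≥0∞) ≤ DP.pVar q φ := by
    rintro v ⟨N, t, f, hm, rfl, hn⟩
    exact atom_bound hp hq hpq φ φ' hderiv hint N t f hm hn
  have claim : ∀ M : ℝ≥0∞, M ≠ ⊤ →
      (∀ v : ℝ → Hsp n, DP.IsUpAtom p v →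
        (‖∫ s : ℝ, (inner ℂ (φ' s) (v s) : ℂ)‖₊ : ℝ≥0∞) ≤ M) →
      ∀ δ : ℝ≥0∞, δ ≠ 0 →
      (‖∫ s : ℝ, (inner ℂ (φ' s) (u s) : ℂ)‖₊ : ℝ≥0∞) ≤ M * (DP.UpNorm p u + δ) := by
    intro M hM hMa δ hδ
    have hlt : DP.UpNorm p u < DP.UpNorm p u + δ := ENNReal.lt_add_right hu hδ
    conv_lhs at hlt => rw [DP.UpNorm]
    simp only [iInf_lt_iff] at hlt
    obtain ⟨c, a, h1, h2, h3, h4⟩ := hlt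
    calc (‖∫ s : ℝ, (inner ℂ (φ' s) (u s) : ℂ)‖₊ : ℝ≥0∞)
        ≤ M * ENNReal.ofReal (∑' j, |c j|) :=
          rep_bound hp φ' hint u c a h1 h2 h3 M hM fun j => hMa _ (h1 j)
      _ ≤ M * (DP.UpNorm p u + δ) := mul_le_mul_right h4.le _
  rcases eq_or_ne (DP.pVar q φ) ⊤ with hP | hP
  · rcases eq_or_ne (DP.UpNorm p u) 0 with hU0 | hU0
    · have hz : (‖∫ s : ℝ, (inner ℂ (φ' s) (u s) : ℂ)‖₊ : ℝ≥0∞) ≤ 0 := by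
        apply ENNReal.le_of_forall_pos_le_add
        intro ε hε _
        rcases eq_or_ne (∫⁻ s : ℝ, (‖φ' s‖₊ : ℝ≥0∞)) 0 with hK0 | hK0
        · have h := claim _ hKne crude 1 one_ne_zero
          rw [hK0, zero_mul] at h
          exact h.trans zero_le
        · have hδ : (ε : ℝ≥0∞) / (∫⁻ s : ℝ, (‖φ' s‖₊ : ℝ≥0∞)) ≠ 0 := by
            simp only [ne_eq, ENNReal.div_eq_zero_iff, not_or]
            exact ⟨by exact_mod_cast hε.ne', hKne⟩
          have h := claim _ hKne crude _ hδ
          rw [hU0, zero_add] at h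
          exact h.trans (ENNReal.mul_div_le.trans_eq (zero_add _).symm)
      rw [hU0, mul_zero]
      exact hz
    · rw [hP, ENNReal.top_mul hU0]
      exact le_top
  · apply ENNReal.le_of_forall_pos_le_add
    intro ε hε hfin
    rcases eq_or_ne (DP.pVar q φ) 0 with hP0 | hP0
    · have h := claim _ hP hatomP 1 one_ne_zero
      rw [hP0, zero_mul] at h
      exact h.trans zero_le
    · have hδ : (ε : ℝ≥0∞) / DP.pVar q φ ≠ 0 := by
        simp only [ne_eq, ENNReal.div_eq_zero_iff, not_or]
        exact ⟨by exact_mod_cast hε.ne', hP⟩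
      have h := claim _ hP hatomP _ hδ
      rw [mul_add] at h
      exact h.trans (add_le_add le_rfl ENNReal.mul_div_le)
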